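/- arXiv:1611.06313 — 2 statements merged into one kernel-verified Lean document; each statement's English description precedes it below -/
import Mathlib

section
/- The differential operator 𝔡 = −d²/dx² + 2(x³ + b x)d/dx − ((4m)x² − b) maps the space of even polynomials of degree at most 2m into itself. -/
open Polynomial

/-- The operator 𝔡 = −d²/dx² + 2(x³ + b x)d/dx − ((4m)x² − b). -/
noncomputable def sexticOpEven (m : ℕ) (b : ℂ) (Q : Polynomial ℂ) : Polynomial ℂ :=
  -(Q.derivative.derivative) + 2 * (X ^ 3 + C b * X) * Q.derivative
    - (C (4 * (m : ℂ)) * X ^ 2 - C b) * Q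

lemma coeff_comp_neg_X' (P : Polynomial ℂ) (k : ℕ) :
    (P.comp (-X)).coeff k = (-1)^k * P.coeff k := by
  induction P using Polynomial.induction_on' with
  | add p q hp hq => simp [add_comp, hp, hq, mul_add]
  | monomial n a =>
      rw [monomial_comp, neg_pow, show ((-1 : Polynomial ℂ)) = C (-1) by simp, ← C_pow]
      simp only [coeff_C_mul, coeff_monomial, coeff_X_pow]
      rcases eq_or_ne n k with h | h
      · subst h; simp; ring
      · simp [h, Ne.symm h]

/-- 𝔡 maps even polynomials of degree ≤ 2m into even polynomials of degree ≤ 2m. -/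
theorem stmt1 (m : ℕ) (b : ℂ) (Q : Polynomial ℂ)
    (heven : Q.comp (-X) = Q) (hdeg : Q.degree ≤ (2 * m : ℕ)) :
    (sexticOpEven m b Q).comp (-X) = sexticOpEven m b Q ∧
      (sexticOpEven m b Q).degree ≤ (2 * m : ℕ) := by
  have hQ' : Q.derivative.comp (-X) = -Q.derivative := by
    have h := congrArg derivative heven
    rw [derivative_comp] at h
    simp only [derivative_neg, derivative_X] at h
    linear_combination -h
  have hQ'' : Q.derivative.derivative.comp (-X) = Q.derivative.derivative := by
    have h := congrArg derivative hQ'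
    rw [derivative_comp] at h
    simp only [derivative_neg, derivative_X] at h
    linear_combination -h
  constructor
  · simp only [sexticOpEven, sub_comp, add_comp, neg_comp, mul_comp, pow_comp, X_comp, C_comp,
      hQ', hQ'', heven, ofNat_comp]
    ring
  · have hodd : ∀ k, Q.coeff (2 * k + 1) = 0 := by
      intro k
      have h := congrArg (fun p => p.coeff (2 * k + 1)) heven
      simp only [coeff_comp_neg_X'] at h
      have hpow : (-1 : ℂ) ^ (2 * k + 1) = -1 := by
        rw [pow_succ, pow_mul]; norm_num
      rw [hpow] at h
      linear_combination h * (-1/2 : ℂ)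
    have hcQ : ∀ k, 2 * m < k → Q.coeff k = 0 := fun k hk =>
      coeff_eq_zero_of_degree_lt (lt_of_le_of_lt hdeg (by exact_mod_cast hk))
    have hform : sexticOpEven m b Q = -(Q.derivative.derivative)
        + 2 * (X ^ 3 * Q.derivative) + 2 * (C b * (X ^ 1 * Q.derivative))
        - 4 * (C (m : ℂ) * (X ^ 2 * Q)) + C b * Q := by
      unfold sexticOpEven
      rw [C_mul, map_ofNat]
      ring
    rw [degree_le_iff_coeff_zero]
    intro n hn
    have hn' : 2 * m < n := by exact_mod_cast hn
    rw [hform]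
    simp only [coeff_add, coeff_sub, coeff_neg, coeff_ofNat_mul, coeff_C_mul, coeff_X_pow_mul',
      coeff_derivative]
    match n, hn' with
    | 1, hn' =>
      have hm : m = 0 := by omega
      subst hm
      simp [hcQ 1 (by omega), hcQ 3 (by omega)]
    | 2, hn' =>
      have hm : m = 0 := by omega
      subst hm
      simp [hcQ 2 (by omega), hcQ 4 (by omega)]
    | (k+3), hn' =>
      have h1 : Q.coeff (k + 3 + 2) = 0 := hcQ _ (by omega)
      have h3 : k + 3 - 3 = k := by omega
      have h4 : k + 3 - 1 = k + 2 := by omega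
      have h5 : k + 3 - 2 = k + 1 := by omega
      have h2 : Q.coeff (k + 2 + 1) = 0 := hcQ _ (by omega)
      have h2' : Q.coeff (k + 3) = 0 := hcQ _ (by omega)
      simp only [h1, h2, h2', h3, h4, h5, if_pos (by omega : 3 ≤ k + 3),
        if_pos (by omega : 1 ≤ k + 3), if_pos (by omega : 2 ≤ k + 3),
        zero_mul, mul_zero, neg_zero, zero_add, add_zero, sub_zero]
      rcases lt_trichotomy (k + 1) (2 * m) with h | h | h
      · have hk : k + 1 = 2 * (m - 1) + 1 := by omega
        rw [hk, hodd]
        ring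
      · have hc : ((k : ℂ) + 1) = 2 * (m : ℂ) := by exact_mod_cast congrArg (Nat.cast (R := ℂ)) h
        linear_combination (2 * Q.coeff (k + 1)) * hc
      · rw [hcQ _ h]
        ring
end

section
/- For b = u + iv with v ≠ 0 and any τ ∈ [0,1], the point λ(τ) = 4τb + 8√(τ²(1−τ)) (with either sign of the square root) lies on the cubic Γ_b: writing λ(τ) = x + iy, one has (x − uy/v)² = (4v − y)y²/v³. -/
/-- for b = u + iv with v ≠ 0 and τ ∈ [0,1], the point
λ(τ) = 4τb ± 8√(τ²(1−τ)) lies on the cubic Γ_b: writing λ = x + iy,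
(x − uy/v)² = (4v − y)y²/v³. -/
theorem stmt17 (u v τ : ℝ) (hv : v ≠ 0) (hτ : τ ∈ Set.Icc (0 : ℝ) 1)
    (ε : ℝ) (hε : ε = 1 ∨ ε = -1) :
    ((4 * τ * (Complex.mk u v) + (ε * 8 * Real.sqrt (τ ^ 2 * (1 - τ)) : ℝ)).re
        - u * (4 * τ * (Complex.mk u v) + (ε * 8 * Real.sqrt (τ ^ 2 * (1 - τ)) : ℝ)).im / v) ^ 2
      = (4 * v - (4 * τ * (Complex.mk u v) + (ε * 8 * Real.sqrt (τ ^ 2 * (1 - τ)) : ℝ)).im)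
          * (4 * τ * (Complex.mk u v) + (ε * 8 * Real.sqrt (τ ^ 2 * (1 - τ)) : ℝ)).im ^ 2
          / v ^ 3 := by
  obtain ⟨h0, h1⟩ := hτ
  have hsq1 : Real.sqrt (1 - τ) ^ 2 = 1 - τ := Real.sq_sqrt (by linarith)
  have hε2 : ε ^ 2 = 1 := by rcases hε with h | h <;> simp [h]
  rw [show Real.sqrt (τ ^ 2 * (1 - τ)) = τ * Real.sqrt (1 - τ) by
    rw [Real.sqrt_mul (sq_nonneg τ), Real.sqrt_sq h0]]
  simp only [Complex.add_re, Complex.add_im, Complex.ofReal_re, Complex.ofReal_im,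
    Complex.mul_re, Complex.mul_im, Complex.ofReal_mul, Complex.re_ofNat, Complex.im_ofNat]
  field_simp
  ring_nf
  linear_combination (64 * τ^2 * v^3 * Real.sqrt (1-τ)^2) * hε2 + (64 * τ^2 * v^3) * hsq1
end
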